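/- Let X and Y be finite multisets of points in ℝ² strictly above the diagonal Δ = {(x,x)}. Let X'₀ and Y'₀ be the orthogonal projections of X and Y onto Δ, and set P = X ⊔ Y'₀ and Q = Y ⊔ X'₀, so |P| = |Q| = |X| + |Y|. For λ ≥ 0 let G_λ(X,Y) be the bipartite graph on P ⊔ Q whose edges are all pairs (p,q) with p ∈ Y'₀ and q ∈ X'₀, together with all pairs (p,q) with (p ∈ X or q ∈ Y) and ‖p − q‖∞ ≤ λ. Then the function λ ↦ [G_λ(X,Y) has a perfect matching] is monotone (feasible for all λ above some threshold), and the minimum feasible λ equals the bottleneck distance W∞(X,Y) between the persistence diagrams determined by X and Y. -/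

import Mathlib

open scoped ENNReal

/-- Orthogonal projection of a planar point onto the diagonal `Δ = {(x,x)}`. -/
noncomputable def projΔ (p : ℝ × ℝ) : ℝ × ℝ := ((p.1 + p.2) / 2, (p.1 + p.2) / 2)

/-- The `L∞`-distance in the plane. -/
noncomputable def dinf (p q : ℝ × ℝ) : ℝ := max |p.1 - q.1| |p.2 - q.2|

variable {m k : ℕ}

/-- Positions of the points of `P = X ⊔ Y'₀` (the off-diagonal points of `X` together
with the projections onto the diagonal of the off-diagonal points of `Y`). -/
noncomputable def posP (X : Fin m → ℝ × ℝ) (Y : Fin k → ℝ × ℝ) : Fin m ⊕ Fin k → ℝ × ℝ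
  | Sum.inl i => X i
  | Sum.inr j => projΔ (Y j)

/-- Positions of the points of `Q = Y ⊔ X'₀`. -/
noncomputable def posQ (X : Fin m → ℝ × ℝ) (Y : Fin k → ℝ × ℝ) : Fin k ⊕ Fin m → ℝ × ℝ
  | Sum.inl j => Y j
  | Sum.inr i => projΔ (X i)

/-- The bipartite graph `G_λ(X,Y)` on `P ⊔ Q` has all edges between `Y'₀` and `X'₀`,
together with all pairs `(p,q)` with `p ∈ X` or `q ∈ Y` at `L∞`-distance at most `λ`.
`HasPMpers X Y lam` states that it has a perfect matching. -/
noncomputable def HasPMpers (X : Fin m → ℝ × ℝ) (Y : Fin k → ℝ × ℝ) (lam : ℝ) : Prop :=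
  ∃ φ : (Fin m ⊕ Fin k) ≃ (Fin k ⊕ Fin m),
    ∀ a, (a.isRight ∧ (φ a).isRight) ∨
      ((a.isLeft ∨ (φ a).isLeft) ∧ dinf (posP X Y a) (posQ X Y (φ a)) ≤ lam)

/-- The persistence diagram determined by the off-diagonal multiset `X`: the points of
`X` together with every diagonal point, each with countably infinite multiplicity. -/
noncomputable def dgmPos (X : Fin m → ℝ × ℝ) : Fin m ⊕ (ℝ × ℕ) → ℝ × ℝ
  | Sum.inl i => X i
  | Sum.inr (x, _) => (x, x)

/-- The bottleneck distance `W∞(X,Y)` between the persistence diagrams determined by the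
off-diagonal multisets `X` and `Y`: the infimum over all bijections `φ` of the diagrams
of `sup_p ‖p − φ(p)‖∞`. -/
noncomputable def Winf (X : Fin m → ℝ × ℝ) (Y : Fin k → ℝ × ℝ) : ℝ≥0∞ :=
  ⨅ φ : (Fin m ⊕ (ℝ × ℕ)) ≃ (Fin k ⊕ (ℝ × ℕ)),
    ⨆ a, ENNReal.ofReal (dinf (dgmPos X a) (dgmPos Y (φ a)))

open scoped NNReal

/-! ### Auxiliary lemmas -/

lemma dinf_nonneg (p q : ℝ × ℝ) : 0 ≤ dinf p q :=
  le_trans (abs_nonneg _) (le_max_left _ _)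

lemma dinf_self' (p : ℝ × ℝ) : dinf p p = 0 := by simp [dinf]

lemma dinf_comm (p q : ℝ × ℝ) : dinf p q = dinf q p := by
  simp [dinf, abs_sub_comm]

lemma dinf_proj_le (p : ℝ × ℝ) (x : ℝ) : dinf p (projΔ p) ≤ dinf p (x, x) := by
  have h1 : |p.1 - p.2| ≤ |p.1 - x| + |x - p.2| := abs_sub_le _ _ _
  have h2 : |x - p.2| = |p.2 - x| := abs_sub_comm _ _
  have hm : |p.1 - p.2| / 2 ≤ max |p.1 - x| |p.2 - x| := by
    have := le_max_left |p.1 - x| |p.2 - x|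
    have := le_max_right |p.1 - x| |p.2 - x|
    nlinarith [abs_nonneg (p.1 - p.2)]
  have hL : dinf p (projΔ p) = |p.1 - p.2| / 2 := by
    simp only [dinf, projΔ]
    rw [show p.1 - (p.1 + p.2)/2 = (p.1 - p.2)/2 by ring,
        show p.2 - (p.1 + p.2)/2 = -((p.1 - p.2)/2) by ring, abs_neg, max_self,
        abs_div, abs_two]
  rw [hL]
  simpa [dinf] using hm

lemma dgmPos_inr (X : Fin m → ℝ × ℝ) (p : ℝ × ℕ) : dgmPos X (Sum.inr p) = (p.1, p.1) := by
  rcases p with ⟨x, n⟩; rfl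

/-! ### The insertion equivalence -/

/-- `Fin c ⊕ ℕ ≃ ℕ`. -/
def finSumNat (c : ℕ) : (Fin c ⊕ ℕ) ≃ ℕ where
  toFun := Sum.elim (fun i => (i : ℕ)) (fun n => n + c)
  invFun n := if h : n < c then Sum.inl ⟨n, h⟩ else Sum.inr (n - c)
  left_inv := by
    rintro (i | n)
    · simp [i.isLt]
    · simp [Nat.not_lt.mpr (Nat.le_add_left c n)]
  right_inv := by
    intro n
    by_cases h : n < c
    · simp [h]
    · simp [h, Nat.sub_add_cancel (Nat.not_lt.mp h)]

lemma exists_insertion {α : Type*} [Fintype α] (v : α → ℝ) :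
    ∃ e : (α ⊕ ℝ × ℕ) ≃ (ℝ × ℕ),
      (∀ a, (e (Sum.inl a)).1 = v a) ∧ (∀ z : ℝ × ℕ, (e (Sum.inr z)).1 = z.1) := by
  classical
  have F : ∀ x : ℝ, {z : α ⊕ ℝ × ℕ // Sum.elim v Prod.fst z = x} ≃ {q : ℝ × ℕ // Prod.fst q = x} := by
    intro x
    have e1 : {q : ℝ × ℕ // Prod.fst q = x} ≃ ℕ :=
      ⟨fun q => q.1.2, fun n => ⟨(x, n), rfl⟩,
       by rintro ⟨⟨a, b⟩, rfl⟩; rfl, fun n => rfl⟩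
    have e2 : {a : α // v a = x} ≃ Fin (Fintype.card {a : α // v a = x}) :=
      Fintype.equivFin _
    exact Equiv.subtypeSum.trans
      (((e2.sumCongr e1).trans (finSumNat _)).trans e1.symm)
  refine ⟨Equiv.ofFiberEquiv F, fun a => ?_, fun z => ?_⟩
  · exact Equiv.ofFiberEquiv_map F (Sum.inl a)
  · exact Equiv.ofFiberEquiv_map F (Sum.inr z)

/-! ### The core finite equivalence extracted from a matching -/

section psi
variable (φ : (Fin m ⊕ Fin k) ≃ (Fin k ⊕ Fin m))

noncomputable def psiFun :
    (Fin m ⊕ {j : Fin k // (φ (Sum.inr j)).isLeft}) →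
    (Fin k ⊕ {i : Fin m // (φ.symm (Sum.inr i)).isLeft})
  | Sum.inl i =>
    match h : φ (Sum.inl i) with
    | Sum.inl j => Sum.inl j
    | Sum.inr i' => Sum.inr ⟨i', by
        have hh : φ.symm (Sum.inr i') = Sum.inl i := by rw [← h, Equiv.symm_apply_apply]
        rw [hh]; rfl⟩
  | Sum.inr ⟨j, hj⟩ =>
    match h : φ (Sum.inr j) with
    | Sum.inl j' => Sum.inl j'
    | Sum.inr _ => by rw [h] at hj; simp at hj

noncomputable def psiInvFun :
    (Fin k ⊕ {i : Fin m // (φ.symm (Sum.inr i)).isLeft}) →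
    (Fin m ⊕ {j : Fin k // (φ (Sum.inr j)).isLeft})
  | Sum.inl j' =>
    match h : φ.symm (Sum.inl j') with
    | Sum.inl i => Sum.inl i
    | Sum.inr j => Sum.inr ⟨j, by
        have hh : φ (Sum.inr j) = Sum.inl j' := by rw [← h, Equiv.apply_symm_apply]
        rw [hh]; rfl⟩
  | Sum.inr ⟨i', hi⟩ =>
    match h : φ.symm (Sum.inr i') with
    | Sum.inl i => Sum.inl i
    | Sum.inr _ => by rw [h] at hi; simp at hi

noncomputable def psiEquiv :
    (Fin m ⊕ {j : Fin k // (φ (Sum.inr j)).isLeft}) ≃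
    (Fin k ⊕ {i : Fin m // (φ.symm (Sum.inr i)).isLeft}) where
  toFun := psiFun φ
  invFun := psiInvFun φ
  left_inv := by
    rintro (i | ⟨j, hj⟩)
    · simp only [psiFun]
      split
      · next j h =>
        simp only [psiInvFun]
        split
        · next i2 h2 =>
          rw [Equiv.symm_apply_eq] at h2
          cases Sum.inl.inj (φ.injective (h.trans h2))
          rfl
        · next j2 h2 =>
          rw [Equiv.symm_apply_eq] at h2
          exact absurd (φ.injective (h.trans h2)) (by simp)
      · next i' h =>
        simp only [psiInvFun]
        split
        · next i2 h2 =>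
          rw [Equiv.symm_apply_eq] at h2
          cases Sum.inl.inj (φ.injective (h.trans h2))
          rfl
        · next j2 h2 =>
          rw [Equiv.symm_apply_eq] at h2
          exact absurd (φ.injective (h.trans h2)) (by simp)
    · simp only [psiFun]
      split
      · next j' h =>
        simp only [psiInvFun]
        split
        · next i2 h2 =>
          rw [Equiv.symm_apply_eq] at h2
          exact absurd (φ.injective (h.trans h2)) (by simp)
        · next j2 h2 =>
          rw [Equiv.symm_apply_eq] at h2
          cases Sum.inr.inj (φ.injective (h.trans h2))
          rfl
      · next i' h => rw [h] at hj; simp at hj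
  right_inv := by
    rintro (j' | ⟨i', hi⟩)
    · simp only [psiInvFun]
      split
      · next i h =>
        simp only [psiFun]
        split
        · next j2 h2 =>
          rw [← Equiv.eq_symm_apply] at h2
          cases Sum.inl.inj (φ.symm.injective (h.trans h2))
          rfl
        · next i2 h2 =>
          rw [← Equiv.eq_symm_apply] at h2
          exact absurd (φ.symm.injective (h.trans h2)) (by simp)
      · next j h =>
        simp only [psiFun]
        split
        · next j2 h2 =>
          rw [← Equiv.eq_symm_apply] at h2
          cases Sum.inl.inj (φ.symm.injective (h.trans h2))
          rfl
        · next i2 h2 =>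
          rw [← Equiv.eq_symm_apply] at h2
          exact absurd (φ.symm.injective (h.trans h2)) (by simp)
    · simp only [psiInvFun]
      split
      · next i h =>
        simp only [psiFun]
        split
        · next j2 h2 =>
          rw [← Equiv.eq_symm_apply] at h2
          exact absurd (φ.symm.injective (h.trans h2)) (by simp)
        · next i2 h2 =>
          rw [← Equiv.eq_symm_apply] at h2
          cases Sum.inr.inj (φ.symm.injective (h.trans h2))
          rfl
      · next j h => rw [h] at hi; simp at hi

end psi

lemma psi_dist (X : Fin m → ℝ × ℝ) (Y : Fin k → ℝ × ℝ) (lam : ℝ)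
    (φ : (Fin m ⊕ Fin k) ≃ (Fin k ⊕ Fin m))
    (hφ : ∀ a, (a.isRight ∧ (φ a).isRight) ∨
      ((a.isLeft ∨ (φ a).isLeft) ∧ dinf (posP X Y a) (posQ X Y (φ a)) ≤ lam)) :
    ∀ w, dinf (Sum.elim X (fun b => projΔ (Y b.1)) w)
      (Sum.elim Y (fun a => projΔ (X a.1)) (psiEquiv φ w)) ≤ lam := by
  rintro (i | ⟨j, hj⟩)
  · rcases hφ (Sum.inl i) with ⟨h1, _⟩ | ⟨_, hd⟩
    · simp at h1
    · simp only [psiEquiv, Equiv.coe_fn_mk, psiFun, Sum.elim_inl]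
      split
      · next j h => rw [h] at hd; simpa [posP, posQ] using hd
      · next i' h => rw [h] at hd; simpa [posP, posQ] using hd
  · rcases hφ (Sum.inr j) with ⟨_, h2⟩ | ⟨_, hd⟩
    · rcases hc : φ (Sum.inr j) with j' | i'
      · rw [hc] at h2; simp at h2
      · rw [hc] at hj; simp at hj
    · simp only [psiEquiv, Equiv.coe_fn_mk, psiFun, Sum.elim_inr]
      split
      · next j' h => rw [h] at hd; simpa [posP, posQ] using hd
      · next i' h => rw [h] at hj; simp at hj

lemma exists_diagram_equiv (X : Fin m → ℝ × ℝ) (Y : Fin k → ℝ × ℝ) (lam : ℝ)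
    (h0 : 0 ≤ lam)
    (φ : (Fin m ⊕ Fin k) ≃ (Fin k ⊕ Fin m))
    (hφ : ∀ a, (a.isRight ∧ (φ a).isRight) ∨
      ((a.isLeft ∨ (φ a).isLeft) ∧ dinf (posP X Y a) (posQ X Y (φ a)) ≤ lam)) :
    ∃ Φ : (Fin m ⊕ ℝ × ℕ) ≃ (Fin k ⊕ ℝ × ℕ),
      ∀ z, dinf (dgmPos X z) (dgmPos Y (Φ z)) ≤ lam := by
  classical
  obtain ⟨eB, hB1, hB2⟩ :=
    exists_insertion (fun b : {j : Fin k // (φ (Sum.inr j)).isLeft} => ((Y b.1).1 + (Y b.1).2) / 2)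
  obtain ⟨eA, hA1, hA2⟩ :=
    exists_insertion (fun a : {i : Fin m // (φ.symm (Sum.inr i)).isLeft} => ((X a.1).1 + (X a.1).2) / 2)
  set ψ := psiEquiv φ with hψdef
  refine ⟨((Equiv.refl (Fin m)).sumCongr eB.symm).trans
    ((Equiv.sumAssoc _ _ _).symm.trans
    ((ψ.sumCongr (Equiv.refl (ℝ × ℕ))).trans
    ((Equiv.sumAssoc _ _ _).trans ((Equiv.refl (Fin k)).sumCongr eA)))), ?_⟩
  have hd := psi_dist X Y lam φ hφ
  rintro (i | p)
  · rcases hw : ψ (Sum.inl i) with j | a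
    · have := hd (Sum.inl i)
      rw [hw] at this
      simp only [Sum.elim_inl, Sum.elim_inr] at this
      simp only [Equiv.trans_apply, Equiv.sumCongr_apply, Sum.map_inl, Sum.map_inr,
        Equiv.refl_apply, Equiv.sumAssoc_symm_apply_inl, hw,
        Equiv.sumAssoc_apply_inl_inl, Equiv.sumAssoc_apply_inl_inr, Equiv.sumAssoc_apply_inr]
      exact this
    · have := hd (Sum.inl i)
      rw [hw] at this
      simp only [Sum.elim_inl, Sum.elim_inr] at this
      simp only [Equiv.trans_apply, Equiv.sumCongr_apply, Sum.map_inl, Sum.map_inr,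
        Equiv.refl_apply, Equiv.sumAssoc_symm_apply_inl, hw,
        Equiv.sumAssoc_apply_inl_inl, Equiv.sumAssoc_apply_inl_inr, Equiv.sumAssoc_apply_inr]
      rw [dgmPos_inr, hA1]
      simpa [dgmPos, projΔ] using this
  · rcases hu : eB.symm p with b | q
    · have hval : ((Y b.1).1 + (Y b.1).2) / 2 = p.1 := by
        rw [← hB1 b, ← hu, Equiv.apply_symm_apply]
      have hp : dgmPos X (Sum.inr p) = projΔ (Y b.1) := by
        rw [dgmPos_inr, ← hval]; rfl
      rcases hw : ψ (Sum.inr b) with j | a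
      · have := hd (Sum.inr b)
        rw [hw] at this
        simp only [Sum.elim_inl, Sum.elim_inr] at this
        simp only [Equiv.trans_apply, Equiv.sumCongr_apply, Sum.map_inl, Sum.map_inr,
          Equiv.refl_apply, hu, Equiv.sumAssoc_symm_apply_inr_inl, hw,
          Equiv.sumAssoc_apply_inl_inl, Equiv.sumAssoc_apply_inl_inr, Equiv.sumAssoc_apply_inr]
        rw [hp]
        simpa [dgmPos] using this
      · have := hd (Sum.inr b)
        rw [hw] at this
        simp only [Sum.elim_inl, Sum.elim_inr] at this
        simp only [Equiv.trans_apply, Equiv.sumCongr_apply, Sum.map_inl, Sum.map_inr,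
          Equiv.refl_apply, hu, Equiv.sumAssoc_symm_apply_inr_inl, hw,
          Equiv.sumAssoc_apply_inl_inl, Equiv.sumAssoc_apply_inl_inr, Equiv.sumAssoc_apply_inr]
        rw [hp, dgmPos_inr, hA1]
        simpa [projΔ] using this
    · have hval : q.1 = p.1 := by
        rw [← hB2 q, ← hu, Equiv.apply_symm_apply]
      simp only [Equiv.trans_apply, Equiv.sumCongr_apply, Sum.map_inl, Sum.map_inr,
        Equiv.refl_apply, hu, Equiv.sumAssoc_symm_apply_inr_inr,
        Equiv.sumAssoc_apply_inr]
      rw [dgmPos_inr, dgmPos_inr, hA2, hval, dinf_self']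
      exact h0

/-! ### Cost of a matching -/

noncomputable def costFn (X : Fin m → ℝ × ℝ) (Y : Fin k → ℝ × ℝ)
    (φ : (Fin m ⊕ Fin k) ≃ (Fin k ⊕ Fin m)) (a : Fin m ⊕ Fin k) : ℝ≥0 :=
  if (a.isRight ∧ (φ a).isRight) then 0
  else ⟨dinf (posP X Y a) (posQ X Y (φ a)), dinf_nonneg _ _⟩

noncomputable def cost (X : Fin m → ℝ × ℝ) (Y : Fin k → ℝ × ℝ)
    (φ : (Fin m ⊕ Fin k) ≃ (Fin k ⊕ Fin m)) : ℝ≥0 :=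
  Finset.univ.sup (costFn X Y φ)

lemma costFn_pos (X : Fin m → ℝ × ℝ) (Y : Fin k → ℝ × ℝ)
    (φ : (Fin m ⊕ Fin k) ≃ (Fin k ⊕ Fin m)) (a : Fin m ⊕ Fin k)
    (h : a.isRight ∧ (φ a).isRight) : costFn X Y φ a = 0 := by
  unfold costFn; exact if_pos h

lemma costFn_neg (X : Fin m → ℝ × ℝ) (Y : Fin k → ℝ × ℝ)
    (φ : (Fin m ⊕ Fin k) ≃ (Fin k ⊕ Fin m)) (a : Fin m ⊕ Fin k)
    (h : ¬(a.isRight ∧ (φ a).isRight)) :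
    ((costFn X Y φ a : ℝ≥0) : ℝ) = dinf (posP X Y a) (posQ X Y (φ a)) := by
  unfold costFn; exact congrArg NNReal.toReal (if_neg h)

lemma hasPM_iff (X : Fin m → ℝ × ℝ) (Y : Fin k → ℝ × ℝ) (lam : ℝ) (h0 : 0 ≤ lam) :
    HasPMpers X Y lam ↔ ∃ φ, ((cost X Y φ : ℝ≥0) : ℝ) ≤ lam := by
  constructor
  · rintro ⟨φ, hφ⟩
    refine ⟨φ, ?_⟩
    have : cost X Y φ ≤ ⟨lam, h0⟩ := by
      refine Finset.sup_le fun a _ => ?_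
      rcases hφ a with h | ⟨_, hd⟩
      · rw [costFn_pos X Y φ a h]; exact zero_le
      · by_cases hc : (a.isRight ∧ (φ a).isRight)
        · rw [costFn_pos X Y φ a hc]; exact zero_le
        · refine NNReal.coe_le_coe.1 ((costFn_neg X Y φ a hc).le.trans ?_)
          exact hd
    exact_mod_cast this
  · rintro ⟨φ, hφ⟩
    refine ⟨φ, fun a => ?_⟩
    by_cases hc : (a.isRight ∧ (φ a).isRight)
    · exact Or.inl hc
    · refine Or.inr ⟨?_, ?_⟩
      · rcases a with i | j
        · exact Or.inl rfl
        · rcases hr : φ (Sum.inr j) with j' | i'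
          · exact Or.inr (by simp [hr])
          · exact absurd ⟨rfl, by simp [hr]⟩ hc
      · have h1 : costFn X Y φ a ≤ cost X Y φ := Finset.le_sup (Finset.mem_univ a)
        have h2 : ((costFn X Y φ a : ℝ≥0) : ℝ) = dinf (posP X Y a) (posQ X Y (φ a)) := by
          exact costFn_neg X Y φ a hc
        calc dinf (posP X Y a) (posQ X Y (φ a)) = _ := h2.symm
          _ ≤ ((cost X Y φ : ℝ≥0) : ℝ) := by exact_mod_cast h1
          _ ≤ lam := hφ

/-! ### From a diagram bijection to a matching -/

section phiOf
variable (Φ : (Fin m ⊕ ℝ × ℕ) ≃ (Fin k ⊕ ℝ × ℕ))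

noncomputable def phiOfFun : Fin m ⊕ Fin k → Fin k ⊕ Fin m
  | Sum.inl i =>
    match Φ (Sum.inl i) with
    | Sum.inl j => Sum.inl j
    | Sum.inr _ => Sum.inr i
  | Sum.inr j =>
    match Φ.symm (Sum.inl j) with
    | Sum.inl i => Sum.inr i
    | Sum.inr _ => Sum.inl j

noncomputable def phiOfInvFun : Fin k ⊕ Fin m → Fin m ⊕ Fin k
  | Sum.inl j =>
    match Φ.symm (Sum.inl j) with
    | Sum.inl i => Sum.inl i
    | Sum.inr _ => Sum.inr j
  | Sum.inr i =>
    match Φ (Sum.inl i) with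
    | Sum.inl j => Sum.inr j
    | Sum.inr _ => Sum.inl i

noncomputable def phiOf : (Fin m ⊕ Fin k) ≃ (Fin k ⊕ Fin m) where
  toFun := phiOfFun Φ
  invFun := phiOfInvFun Φ
  left_inv := by
    rintro (i | j)
    · simp only [phiOfFun]
      split
      · next j h =>
        have h' : Φ.symm (Sum.inl j) = Sum.inl i := by rw [← h, Equiv.symm_apply_apply]
        simp only [phiOfInvFun]
        split
        · next i2 h2 => rw [h'] at h2; exact congrArg Sum.inl (Sum.inl.inj h2).symm
        · next q h2 => rw [h'] at h2; exact absurd h2 (by simp)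
      · next q h =>
        simp only [phiOfInvFun]
        split
        · next j2 h2 => rw [h] at h2; exact absurd h2 (by simp)
        · next q2 h2 => rfl
    · simp only [phiOfFun]
      split
      · next i h =>
        have h' : Φ (Sum.inl i) = Sum.inl j := by rw [← h, Equiv.apply_symm_apply]
        simp only [phiOfInvFun]
        split
        · next j2 h2 => rw [h'] at h2; exact congrArg Sum.inr (Sum.inl.inj h2).symm
        · next q h2 => rw [h'] at h2; exact absurd h2 (by simp)
      · next q h =>
        simp only [phiOfInvFun]
        split
        · next i2 h2 => rw [h] at h2; exact absurd h2 (by simp)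
        · next q2 h2 => rfl
  right_inv := by
    rintro (j | i)
    · simp only [phiOfInvFun]
      split
      · next i h =>
        have h' : Φ (Sum.inl i) = Sum.inl j := by rw [← h, Equiv.apply_symm_apply]
        simp only [phiOfFun]
        split
        · next j2 h2 => rw [h'] at h2; exact congrArg Sum.inl (Sum.inl.inj h2).symm
        · next q h2 => rw [h'] at h2; exact absurd h2 (by simp)
      · next q h =>
        simp only [phiOfFun]
        split
        · next i2 h2 => rw [h] at h2; exact absurd h2 (by simp)
        · next q2 h2 => rfl
    · simp only [phiOfInvFun]
      split
      · next j h =>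
        have h' : Φ.symm (Sum.inl j) = Sum.inl i := by rw [← h, Equiv.symm_apply_apply]
        simp only [phiOfFun]
        split
        · next i2 h2 => rw [h'] at h2; exact congrArg Sum.inr (Sum.inl.inj h2).symm
        · next q h2 => rw [h'] at h2; exact absurd h2 (by simp)
      · next q h =>
        simp only [phiOfFun]
        split
        · next j2 h2 => rw [h] at h2; exact absurd h2 (by simp)
        · next q2 h2 => rfl

lemma phiOf_bound (X : Fin m → ℝ × ℝ) (Y : Fin k → ℝ × ℝ) :
    ∀ a : Fin m ⊕ Fin k, ¬((a.isRight : Prop) ∧ ((phiOf Φ a).isRight : Prop)) →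
      ∃ z, dinf (posP X Y a) (posQ X Y (phiOf Φ a)) ≤ dinf (dgmPos X z) (dgmPos Y (Φ z)) := by
  have hcoe : ∀ a, phiOf Φ a = phiOfFun Φ a := fun a => rfl
  rintro (i | j) hneg
  · refine ⟨Sum.inl i, ?_⟩
    rw [hcoe]
    simp only [phiOfFun]
    split
    · next j h => rw [h]; simp [posP, posQ, dgmPos]
    · next q h =>
      rw [h, dgmPos_inr]
      show dinf (X i) (projΔ (X i)) ≤ dinf (dgmPos X (Sum.inl i)) (q.1, q.1)
      exact dinf_proj_le (X i) q.1
  · rw [hcoe] at hneg ⊢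
    revert hneg
    simp only [phiOfFun]
    split
    · next i h => intro hneg; exact absurd ⟨rfl, rfl⟩ hneg
    · next q h =>
      intro _
      refine ⟨Sum.inr q, ?_⟩
      have hq : Φ (Sum.inr q) = Sum.inl j := by rw [← h, Equiv.apply_symm_apply]
      rw [hq, dgmPos_inr]
      show dinf (projΔ (Y j)) (Y j) ≤ dinf ((q.1, q.1)) (Y j)
      rw [dinf_comm (projΔ (Y j)) (Y j), dinf_comm _ (Y j)]
      exact dinf_proj_le (Y j) q.1

end phiOf

/-! ### Main theorem -/

theorem stmt14 (m k : ℕ) (X : Fin m → ℝ × ℝ) (Y : Fin k → ℝ × ℝ)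
    (hX : ∀ i, (X i).1 < (X i).2) (hY : ∀ j, (Y j).1 < (Y j).2) :
    (∀ lam lam' : ℝ, 0 ≤ lam → lam ≤ lam' → HasPMpers X Y lam → HasPMpers X Y lam') ∧
    (∃ lam : ℝ, 0 ≤ lam ∧ HasPMpers X Y lam ∧
      (∀ μ : ℝ, 0 ≤ μ → HasPMpers X Y μ → lam ≤ μ) ∧
      ENNReal.ofReal lam = Winf X Y) := by
  classical
  constructor
  · rintro lam lam' _ hle ⟨φ, hφ⟩
    refine ⟨φ, fun a => ?_⟩
    rcases hφ a with h | ⟨hl, hd⟩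
    · exact Or.inl h
    · exact Or.inr ⟨hl, hd.trans hle⟩
  · -- choose a minimal-cost matching
    obtain ⟨φs, -, hmin⟩ := Finset.exists_min_image (Finset.univ :
      Finset ((Fin m ⊕ Fin k) ≃ (Fin k ⊕ Fin m))) (cost X Y)
      ⟨Equiv.sumComm (Fin m) (Fin k), Finset.mem_univ _⟩
    refine ⟨((cost X Y φs : ℝ≥0) : ℝ), (cost X Y φs).2, ?_, ?_, ?_⟩
    · exact (hasPM_iff X Y _ (cost X Y φs).2).2 ⟨φs, le_refl _⟩
    · intro μ hμ hPM
      obtain ⟨φ, hφ⟩ := (hasPM_iff X Y μ hμ).1 hPM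
      exact le_trans (by exact_mod_cast hmin φ (Finset.mem_univ _)) hφ
    · apply le_antisymm
      · -- ofReal lam* ≤ Winf
        refine le_iInf fun Φ => ?_
        have hmin' : cost X Y φs ≤ cost X Y (phiOf Φ) := hmin _ (Finset.mem_univ _)
        have hΦb := phiOf_bound Φ X Y
        have key : ENNReal.ofReal ((cost X Y (phiOf Φ) : ℝ≥0) : ℝ) ≤
            ⨆ z, ENNReal.ofReal (dinf (dgmPos X z) (dgmPos Y (Φ z))) := by
          rcases Finset.eq_empty_or_nonempty (Finset.univ : Finset (Fin m ⊕ Fin k)) with he | hne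
          · unfold cost
            rw [he, Finset.sup_empty]
            simp
          · obtain ⟨a0, -, ha0⟩ := Finset.exists_mem_eq_sup Finset.univ hne
              (costFn X Y (phiOf Φ))
            unfold cost
            rw [ha0]
            by_cases hc : ((a0.isRight : Prop) ∧ (((phiOf Φ) a0).isRight : Prop))
            · rw [costFn_pos X Y (phiOf Φ) a0 hc]; simp
            · obtain ⟨z, hz⟩ := hΦb a0 hc
              rw [costFn_neg X Y (phiOf Φ) a0 hc]
              exact le_trans (ENNReal.ofReal_le_ofReal hz)
                (le_iSup (fun z => ENNReal.ofReal (dinf (dgmPos X z) (dgmPos Y (Φ z)))) z)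
        refine le_trans (ENNReal.ofReal_le_ofReal ?_) key
        exact_mod_cast hmin'
      · -- Winf ≤ ofReal lam*
        obtain ⟨φ, hφ⟩ := (hasPM_iff X Y _ (cost X Y φs).2).2 ⟨φs, le_refl _⟩
        obtain ⟨Φ, hΦ⟩ := exists_diagram_equiv X Y _ (cost X Y φs).2 φ hφ
        refine iInf_le_of_le Φ (iSup_le fun z => ?_)
        exact ENNReal.ofReal_le_ofReal (hΦ z)
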